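/- For every solution (v, (a,b), z), the coordinates of v in positions p2+1 through p−q2 of the left block are, in order, i_1+1, i_2+2, …, i_r+r, j_1+p−s+1, j_2+p−s+2, …, j_s+p, and the coordinates of v in positions q2+1 through q−p2 of the right block are, in order, k_1+1, k_2+2, …, k_t+t, l_1+q−u+1, l_2+q−u+2, …, l_u+q. In other words, the middle windows of the two blocks of v carry exactly the tail entries of τ̃. -/

import Mathlib

/-- A block vector with `r` head entries `f m + (m+1)`, then `c` equal middle entries
`mid`, then tail entries `g (m − (r+c)) + (m+1)` (0-based index `m`).  With
`f = i, g = j` (resp. `f = k, g = l`) and `mid = (p2+q2+1)/2 + r` (resp. `+ t`) this is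
the left (resp. right) block of the vector `τ̃` of the `U(p,q)` computation. -/
def blockVec (r c : ℕ) (mid : ℚ) (f g : ℕ → ℚ) : ℕ → ℚ := fun m =>
  if m < r then f m + (m + 1)
  else if m < r + c then mid
  else g (m - (r + c)) + (m + 1)

/-- The left block of the vector `μ̃(a,b)` of the `U(p,q)` computation
(0-based index `m`, relevant for `m < p = p1 + p2 = p2 + r + s + q2`). -/
def muLeft (p1 q1 p2 q2 r s : ℕ) (ξ : ℤ) (b : Fin p2 → ℤ) (a : Fin q2 → ℤ) :
    ℕ → ℚ := fun m =>
  if h : m < p2 then ((p1 : ℚ) - q1) / 2 - b ⟨m, h⟩ + (m + 1)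
  else if m < p2 + r + s then (ξ : ℚ) + ((q2 : ℚ) - p2) / 2 + (m + 1)
  else if h3 : p2 + r + s + q2 - 1 - m < q2 then
    (ξ : ℚ) + ((q2 : ℚ) - p2) / 2 + a ⟨p2 + r + s + q2 - 1 - m, h3⟩ + (m + 1)
  else 0

/-- The right block of the vector `μ̃(a,b)` of the `U(p,q)` computation
(0-based index `m`, relevant for `m < q = q1 + q2 = q2 + t + u + p2`). -/
def muRight (p1 q1 p2 q2 t u : ℕ) (ξ : ℤ) (b : Fin p2 → ℤ) (a : Fin q2 → ℤ) :
    ℕ → ℚ := fun m =>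
  if h : m < q2 then ((q1 : ℚ) - p1) / 2 - a ⟨m, h⟩ + (m + 1)
  else if m < q2 + t + u then (ξ : ℚ) + ((p2 : ℚ) - q2) / 2 + (m + 1)
  else if h3 : q2 + t + u + p2 - 1 - m < p2 then
    (ξ : ℚ) + ((p2 : ℚ) - q2) / 2 + b ⟨q2 + t + u + p2 - 1 - m, h3⟩ + (m + 1)
  else 0

/-- A *solution* `(v, (a,b), z)` of the Dirac cohomology equation for the unipotent
representation `X(p1,q1,ξ)` of `U(p,q)`: the left (length `p = p1+p2`) and right
(length `q = q1+q2`) blocks of `v` are permutations of the corresponding blocks of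
`τ̃`; `b_1 ≥ … ≥ b_{p2} ≥ 0` and `a_1 ≥ … ≥ a_{q2} ≥ 0` are integers; `z` is a shuffle
vector (both blocks strictly decreasing, with multiset of all `p+q` coordinates equal
to `{(p+q−1)/2, (p+q−3)/2, …, −(p+q−1)/2}`); and `v = μ̃(a,b) + z` coordinatewise. -/
structure USol (p1 p2 q1 q2 r s t u : ℕ) (ξ : ℤ) (i j k l : ℕ → ℚ) where
  vL : Fin (p1 + p2) → ℚ
  vR : Fin (q1 + q2) → ℚ
  b : Fin p2 → ℤ
  a : Fin q2 → ℤ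
  zL : Fin (p1 + p2) → ℚ
  zR : Fin (q1 + q2) → ℚ
  b_anti : Antitone b
  b_nonneg : ∀ m, 0 ≤ b m
  a_anti : Antitone a
  a_nonneg : ∀ m, 0 ≤ a m
  hvL : Multiset.map vL Finset.univ.val =
    Multiset.map (fun m : Fin (p1 + p2) =>
      blockVec r (p2 + q2) (((p2 : ℚ) + q2 + 1) / 2 + r) i j m.1) Finset.univ.val
  hvR : Multiset.map vR Finset.univ.val =
    Multiset.map (fun m : Fin (q1 + q2) =>
      blockVec t (p2 + q2) (((p2 : ℚ) + q2 + 1) / 2 + t) k l m.1) Finset.univ.val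
  zL_anti : StrictAnti zL
  zR_anti : StrictAnti zR
  hz : Multiset.map zL Finset.univ.val + Multiset.map zR Finset.univ.val =
    Multiset.map (fun m : ℕ => ((p1 : ℚ) + p2 + q1 + q2 - 1) / 2 - m)
      (Finset.range (p1 + p2 + q1 + q2)).val
  heqL : ∀ m : Fin (p1 + p2), vL m = muLeft p1 q1 p2 q2 r s ξ b a m.1 + zL m
  heqR : ∀ m : Fin (q1 + q2), vR m = muRight p1 q1 p2 q2 t u ξ b a m.1 + zR m


open Finset


lemma map_univ_eq_map_range {n : ℕ} (v : Fin n → ℚ) :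
    Multiset.map v Finset.univ.val =
    Multiset.map (fun m => if h : m < n then v ⟨m, h⟩ else 0) (Finset.range n).val := by
  have h1 : (Finset.range n) = Finset.map Fin.valEmbedding (Finset.univ : Finset (Fin n)) := by
    rw [Fin.map_valEmbedding_univ]; ext x; simp
  rw [h1]
  rw [Finset.map_val, Multiset.map_map]
  apply Multiset.map_congr rfl
  intro x _
  simp

lemma card_filter_of_map_eq {n : ℕ} (g1 g2 : ℕ → ℚ)
    (h : Multiset.map g1 (Finset.range n).val = Multiset.map g2 (Finset.range n).val)
    (pred : ℚ → Prop) [DecidablePred pred] :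
    ((Finset.range n).filter (fun m => pred (g1 m))).card
      = ((Finset.range n).filter (fun m => pred (g2 m))).card := by
  have h2 := congrArg (Multiset.countP pred) h
  rw [Multiset.countP_map, Multiset.countP_map] at h2
  exact h2

lemma gap_lemma (g : ℕ → ℚ) (n : ℕ) (c0 : ℚ)
    (hdec : ∀ m m', m < m' → m' < n → g m' < g m)
    (hlat : ∀ m, m < n → ∃ e : ℤ, g m = c0 + e) :
    ∀ m d, m + d < n → g (m + d) + d ≤ g m := by
  intro m d
  induction d with
  | zero => simp
  | succ d ih =>
    intro h
    have h1 : g (m+d+1) < g (m+d) := hdec _ _ (by omega) (by omega)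
    obtain ⟨e1, he1⟩ := hlat (m+d) (by omega)
    obtain ⟨e2, he2⟩ := hlat (m+d+1) (by omega)
    have he : e2 < e1 := by
      by_contra hc
      push_neg at hc
      have : (e1 : ℚ) ≤ e2 := by exact_mod_cast hc
      rw [he1, he2] at h1; linarith
    have he' : (e2 : ℚ) + 1 ≤ e1 := by exact_mod_cast he
    have h2 := ih (by omega)
    have : m + (d+1) = m + d + 1 := by omega
    rw [this]
    push_cast
    rw [he2]
    rw [he1] at h2
    push_cast at h2
    linarith

lemma filter_range_iff (t : ℕ) (pred : ℕ → Prop) [DecidablePred pred]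
    (hdc : ∀ m m', m ≤ m' → m' < t → pred m' → pred m) :
    ∀ m < t, (pred m ↔ m < ((Finset.range t).filter pred).card) := by
  set κ := ((Finset.range t).filter pred).card with hκ
  have hnot : ∀ m, κ ≤ m → m < t → ¬ pred m := by
    intro m hm1 hm2 hp
    have hsub : Finset.range (m+1) ⊆ (Finset.range t).filter pred := by
      intro x hx
      simp only [Finset.mem_range] at hx
      simp only [Finset.mem_filter, Finset.mem_range]
      exact ⟨by omega, hdc x m (by omega) hm2 hp⟩
    have := Finset.card_le_card hsub
    simp only [Finset.card_range] at this
    omega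
  have hsub : (Finset.range t).filter pred ⊆ Finset.range κ := by
    intro x hx
    simp only [Finset.mem_filter, Finset.mem_range] at hx
    simp only [Finset.mem_range]
    by_contra hc
    exact hnot x (by omega) hx.1 hx.2
  have heq : (Finset.range t).filter pred = Finset.range κ :=
    Finset.eq_of_subset_of_card_le hsub (by simp [hκ])
  intro m hm
  constructor
  · intro hp
    have hmem : m ∈ (Finset.range t).filter pred := by
      simp only [Finset.mem_filter, Finset.mem_range]; exact ⟨hm, hp⟩
    rw [heq] at hmem
    simpa using hmem
  · intro hlt
    have hmem : m ∈ Finset.range κ := by simpa using hlt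
    rw [← heq] at hmem
    simp only [Finset.mem_filter] at hmem
    exact hmem.2

section Block

variable (P2 R S Q2 : ℕ) (base Cq : ℚ) (I J v z : ℕ → ℚ)
  (hbase : base = ((P2 : ℚ) + Q2 + 1) / 2)
  (hvub : ∀ m, m < P2 + R + S → v m ≤ Cq + ((m : ℚ) + 1) + z m)
  (hvlb : ∀ m, P2 ≤ m → m < P2 + R + S + Q2 → Cq + ((m : ℚ) + 1) + z m ≤ v m)
  (hzgap : ∀ m d, m + d < P2 + R + S + Q2 → z (m + d) + (d : ℚ) ≤ z m)
  (hIgap : ∀ m d, m + d < R → I (m + d) + (d : ℚ) ≤ I m)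
  (hJgap : ∀ m d, m + d < S → J (m + d) + (d : ℚ) ≤ J m)
  (hIlb : ∀ m, m < R → base + (R : ℚ) - 1 - (m : ℚ) ≤ I m)
  (hJub : ∀ c, c < S → J c ≤ -base - (c : ℚ))

-- the three value regimes of blockVec
lemma blockVec_head (m : ℕ) (hm : m < R) :
    blockVec R (P2 + Q2) (base + R) I J m = I m + ((m : ℚ) + 1) := by
  simp only [blockVec, if_pos hm]

lemma blockVec_mid (m : ℕ) (hm1 : R ≤ m) (hm2 : m < R + (P2 + Q2)) :
    blockVec R (P2 + Q2) (base + R) I J m = base + R := by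
  simp only [blockVec]
  rw [if_neg (by omega), if_pos (by omega)]

lemma blockVec_tail (m : ℕ) (hm : R + (P2 + Q2) ≤ m) :
    blockVec R (P2 + Q2) (base + R) I J m
      = J (m - (R + (P2 + Q2))) + ((m : ℚ) + 1) := by
  simp only [blockVec]
  rw [if_neg (by omega), if_neg (by omega)]

include hbase hIlb hJub in
lemma blockVec_le_max (m : ℕ) (hm : m < P2 + R + S + Q2) (m0 : ℕ) (hm0 : m0 < R)
    (hmem : I m0 + ((m0 : ℚ) + 1) < blockVec R (P2 + Q2) (base + R) I J m) :
    m < R := by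
  by_contra hc
  push_neg at hc
  rcases lt_or_ge m (R + (P2 + Q2)) with h2 | h2
  · rw [blockVec_mid P2 R Q2 base I J m hc h2] at hmem
    have := hIlb m0 hm0
    linarith
  · rw [blockVec_tail P2 R Q2 base I J m h2] at hmem
    set c := m - (R + (P2 + Q2)) with hcdef
    have hcS : c < S := by omega
    have h3 := hJub c hcS
    have h4 := hIlb m0 hm0
    have hmc : (m : ℚ) = (R : ℚ) + P2 + Q2 + (c : ℚ) := by
      have : m = R + (P2 + Q2) + c := by omega
      rw [this]; push_cast; ring
    rw [hmc] at hmem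
    rw [hbase] at h3 h4
    linarith

-- E1 : head-window upper bounds
include hvub hvlb hzgap hIgap hIlb hJub hbase in
lemma blk_B1
    (hcntgt : ∀ x : ℚ,
      ((Finset.range (P2 + R + S + Q2)).filter (fun m => x < v m)).card =
      ((Finset.range (P2 + R + S + Q2)).filter
        (fun m => x < blockVec R (P2 + Q2) (base + R) I J m)).card)
    (m0 : ℕ) (hm0 : m0 < R) :
    v (P2 + m0) ≤ I m0 + ((m0 : ℚ) + 1) := by
  by_contra hgt
  push_neg at hgt
  set n := P2 + R + S + Q2 with hn
  set x := I m0 + ((m0 : ℚ) + 1) with hx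
  -- lower bound on count of coordinates > x
  have hsub1 : Finset.Ico P2 (P2 + m0 + 1) ⊆
      (Finset.range n).filter (fun m => x < v m) := by
    intro m hm
    rw [Finset.mem_Ico] at hm
    rw [Finset.mem_filter, Finset.mem_range]
    constructor
    · omega
    · have h1 : Cq + ((m : ℚ) + 1) + z m ≤ v m := hvlb m hm.1 (by omega)
      have h2 : z (m + (P2 + m0 - m)) + ((P2 + m0 - m : ℕ) : ℚ) ≤ z m :=
        hzgap m (P2 + m0 - m) (by omega)
      have h3 : m + (P2 + m0 - m) = P2 + m0 := by omega
      rw [h3] at h2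
      have h4 : ((P2 + m0 - m : ℕ) : ℚ) = (P2 : ℚ) + m0 - m := by
        have : P2 + m0 - m + m = P2 + m0 := by omega
        have := congrArg (fun y : ℕ => (y : ℚ)) this
        push_cast at this
        linarith
      rw [h4] at h2
      have h5 : v (P2 + m0) ≤ Cq + (((P2 + m0 : ℕ) : ℚ) + 1) + z (P2 + m0) :=
        hvub (P2 + m0) (by omega)
      push_cast at h5
      linarith
  have hc1 : m0 + 1 ≤ ((Finset.range n).filter (fun m => x < v m)).card := by
    have := Finset.card_le_card hsub1
    rwa [Nat.card_Ico, show P2 + m0 + 1 - P2 = m0 + 1 by omega] at this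
  -- upper bound on count on the blockVec side
  have hsub2 : (Finset.range n).filter
      (fun m => x < blockVec R (P2 + Q2) (base + R) I J m) ⊆ Finset.range m0 := by
    intro m hm
    rw [Finset.mem_filter, Finset.mem_range] at hm
    rw [Finset.mem_range]
    have hmR : m < R := blockVec_le_max P2 R S Q2 base I J hbase hIlb hJub m hm.1 m0 hm0 hm.2
    by_contra hc
    push_neg at hc
    have h1 := hIgap m0 (m - m0) (by omega)
    have h2 : m0 + (m - m0) = m := by omega
    rw [h2] at h1
    have h3 : ((m - m0 : ℕ) : ℚ) = (m : ℚ) - m0 := by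
      have : m - m0 + m0 = m := by omega
      have := congrArg (fun y : ℕ => (y : ℚ)) this
      push_cast at this
      linarith
    rw [h3] at h1
    have h4 := hm.2
    rw [blockVec_head P2 R Q2 base I J m hmR] at h4
    rw [hx] at h4
    linarith
  have hc2 := Finset.card_le_card hsub2
  rw [Finset.card_range] at hc2
  rw [hcntgt x] at hc1
  omega

-- E2 : tail-window lower bounds
include hvub hvlb hzgap hJgap hIlb hJub hbase in
lemma blk_B2
    (hcntlt : ∀ x : ℚ,
      ((Finset.range (P2 + R + S + Q2)).filter (fun m => v m < x)).card =
      ((Finset.range (P2 + R + S + Q2)).filter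
        (fun m => blockVec R (P2 + Q2) (base + R) I J m < x)).card)
    (c0 : ℕ) (hc0 : c0 < S) :
    J c0 + ((P2 : ℚ) + Q2 + R + c0 + 1) ≤ v (P2 + R + c0) := by
  by_contra hlt
  push_neg at hlt
  set n := P2 + R + S + Q2 with hn
  set x := J c0 + ((P2 : ℚ) + Q2 + R + c0 + 1) with hx
  have hxM : x ≤ base + R := by
    have := hJub c0 hc0
    rw [hbase]; rw [hbase] at this
    rw [hx]; linarith
  have hsub1 : Finset.Ico (P2 + R + c0) (P2 + R + S) ⊆
      (Finset.range n).filter (fun m => v m < x) := by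
    intro m hm
    rw [Finset.mem_Ico] at hm
    rw [Finset.mem_filter, Finset.mem_range]
    constructor
    · omega
    · have h1 : v m ≤ Cq + ((m : ℚ) + 1) + z m := hvub m (by omega)
      have h2 : z ((P2 + R + c0) + (m - (P2 + R + c0))) + ((m - (P2 + R + c0) : ℕ) : ℚ)
          ≤ z (P2 + R + c0) := hzgap (P2 + R + c0) (m - (P2 + R + c0)) (by omega)
      have h3 : (P2 + R + c0) + (m - (P2 + R + c0)) = m := by omega
      rw [h3] at h2
      have h4 : ((m - (P2 + R + c0) : ℕ) : ℚ) = (m : ℚ) - ((P2 : ℚ) + R + c0) := by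
        have : m - (P2 + R + c0) + (P2 + R + c0) = m := by omega
        have := congrArg (fun y : ℕ => (y : ℚ)) this
        push_cast at this
        linarith
      rw [h4] at h2
      have h5 : Cq + (((P2 + R + c0 : ℕ) : ℚ) + 1) + z (P2 + R + c0) ≤ v (P2 + R + c0) :=
        hvlb (P2 + R + c0) (by omega) (by omega)
      push_cast at h5
      linarith
  have hc1 : S - c0 ≤ ((Finset.range n).filter (fun m => v m < x)).card := by
    have := Finset.card_le_card hsub1
    rwa [Nat.card_Ico, show P2 + R + S - (P2 + R + c0) = S - c0 by omega] at this
  have hsub2 : (Finset.range n).filter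
      (fun m => blockVec R (P2 + Q2) (base + R) I J m < x) ⊆
      Finset.Ico (R + (P2 + Q2) + c0 + 1) n := by
    intro m hm
    rw [Finset.mem_filter, Finset.mem_range] at hm
    rw [Finset.mem_Ico]
    refine ⟨?_, hm.1⟩
    have hmn := hm.1
    have hval := hm.2
    by_contra hc
    push_neg at hc
    rcases lt_or_ge m R with h1 | h1
    · rw [blockVec_head P2 R Q2 base I J m h1] at hval
      have := hIlb m h1
      linarith
    · rcases lt_or_ge m (R + (P2 + Q2)) with h2 | h2
      · rw [blockVec_mid P2 R Q2 base I J m h1 h2] at hval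
        linarith
      · rw [blockVec_tail P2 R Q2 base I J m h2] at hval
        set c := m - (R + (P2 + Q2)) with hcdef
        have hcc0 : c ≤ c0 := by omega
        have h3 := hJgap c (c0 - c) (by omega)
        have h4 : c + (c0 - c) = c0 := by omega
        rw [h4] at h3
        have h5 : ((c0 - c : ℕ) : ℚ) = (c0 : ℚ) - c := by
          have : c0 - c + c = c0 := by omega
          have := congrArg (fun y : ℕ => (y : ℚ)) this
          push_cast at this
          linarith
        rw [h5] at h3
        have h6 : (m : ℚ) = (R : ℚ) + P2 + Q2 + c := by
          have : m = R + (P2 + Q2) + c := by omega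
          rw [this]; push_cast; ring
        rw [h6] at hval
        rw [hx] at hval
        linarith
  have hc2 := Finset.card_le_card hsub2
  rw [Nat.card_Ico] at hc2
  have hc2' : ((Finset.range n).filter
      (fun m => blockVec R (P2 + Q2) (base + R) I J m < x)).card ≤ S - c0 - 1 := by
    omega
  rw [hcntlt x] at hc1
  omega

-- count of coordinates > M is at most R
include hbase hIlb hJub in
lemma blk_B3
    (hcntgt : ∀ x : ℚ,
      ((Finset.range (P2 + R + S + Q2)).filter (fun m => x < v m)).card =
      ((Finset.range (P2 + R + S + Q2)).filter
        (fun m => x < blockVec R (P2 + Q2) (base + R) I J m)).card) :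
    ((Finset.range (P2 + R + S + Q2)).filter (fun m => base + (R : ℚ) < v m)).card ≤ R := by
  rw [hcntgt (base + (R : ℚ))]
  have hsub : (Finset.range (P2 + R + S + Q2)).filter
      (fun m => base + (R : ℚ) < blockVec R (P2 + Q2) (base + R) I J m) ⊆
      Finset.range R := by
    intro m hm
    rw [Finset.mem_filter, Finset.mem_range] at hm
    rw [Finset.mem_range]
    by_contra hc
    push_neg at hc
    rcases lt_or_ge m (R + (P2 + Q2)) with h2 | h2
    · rw [blockVec_mid P2 R Q2 base I J m hc h2] at hm
      exact absurd hm.2 (lt_irrefl _)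
    · have hval := hm.2
      rw [blockVec_tail P2 R Q2 base I J m h2] at hval
      set c := m - (R + (P2 + Q2)) with hcdef
      have hcS : c < S := by omega
      have h3 := hJub c hcS
      have h6 : (m : ℚ) = (R : ℚ) + P2 + Q2 + c := by
        have : m = R + (P2 + Q2) + c := by omega
        rw [this]; push_cast; ring
      rw [h6] at hval
      rw [hbase] at hval h3
      linarith
  have := Finset.card_le_card hsub
  rwa [Finset.card_range] at this

-- count of coordinates < M is at most S
include hbase hIlb in
lemma blk_B4
    (hcntlt : ∀ x : ℚ,
      ((Finset.range (P2 + R + S + Q2)).filter (fun m => v m < x)).card =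
      ((Finset.range (P2 + R + S + Q2)).filter
        (fun m => blockVec R (P2 + Q2) (base + R) I J m < x)).card) :
    ((Finset.range (P2 + R + S + Q2)).filter (fun m => v m < base + (R : ℚ))).card ≤ S := by
  rw [hcntlt (base + (R : ℚ))]
  have hsub : (Finset.range (P2 + R + S + Q2)).filter
      (fun m => blockVec R (P2 + Q2) (base + R) I J m < base + (R : ℚ)) ⊆
      Finset.Ico (R + (P2 + Q2)) (P2 + R + S + Q2) := by
    intro m hm
    rw [Finset.mem_filter, Finset.mem_range] at hm
    rw [Finset.mem_Ico]
    refine ⟨?_, hm.1⟩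
    by_contra hc
    push_neg at hc
    rcases lt_or_ge m R with h1 | h1
    · have hval := hm.2
      rw [blockVec_head P2 R Q2 base I J m h1] at hval
      have := hIlb m h1
      linarith
    · have hval := hm.2
      rw [blockVec_mid P2 R Q2 base I J m h1 (by omega)] at hval
      exact absurd hval (lt_irrefl _)
  have := Finset.card_le_card hsub
  rw [Nat.card_Ico] at this
  omega

end Block

lemma card_filter_add_of_map_eq {n1 n2 n3 : ℕ} (g1 g2 g3 : ℕ → ℚ)
    (h : Multiset.map g1 (Finset.range n1).val + Multiset.map g2 (Finset.range n2).val
        = Multiset.map g3 (Finset.range n3).val)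
    (pred : ℚ → Prop) [DecidablePred pred] :
    ((Finset.range n1).filter (fun m => pred (g1 m))).card
      + ((Finset.range n2).filter (fun m => pred (g2 m))).card
      = ((Finset.range n3).filter (fun m => pred (g3 m))).card := by
  have h2 := congrArg (Multiset.countP pred) h
  rw [Multiset.countP_add, Multiset.countP_map, Multiset.countP_map,
    Multiset.countP_map] at h2
  exact h2

lemma map_univ_comp_val {n : ℕ} (g : ℕ → ℚ) :
    Multiset.map (fun m : Fin n => g m.1) Finset.univ.val
      = Multiset.map g (Finset.range n).val := by
  have h1 : (Finset.range n) = Finset.map Fin.valEmbedding (Finset.univ : Finset (Fin n)) := by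
    rw [Fin.map_valEmbedding_univ]; ext x; simp
  rw [h1, Finset.map_val, Multiset.map_map]
  rfl

lemma nat_cast_sub_q (a b : ℕ) (h : b ≤ a) : ((a - b : ℕ) : ℚ) = (a : ℚ) - b := by
  have : a - b + b = a := by omega
  have h2 := congrArg (fun y : ℕ => (y : ℚ)) this
  push_cast at h2
  linarith

set_option maxHeartbeats 2000000 in
lemma halfL
    (p1 p2 q1 q2 r s t u : ℕ) (ξ : ℤ) (i j k l : ℕ → ℚ)
    (hξ3 : (p1 : ℤ) + p2 ≤ (q1 : ℤ) + q2 + 2 * ξ)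
    (hξ4 : (q1 : ℤ) + q2 ≤ (p1 : ℤ) + p2 + 2 * ξ)
    (hrt : 2 * ((r : ℤ) + t) = (p1 : ℤ) + q1 - p2 - q2 + 2 * ξ)
    (hsu : 2 * ((s : ℤ) + u) = (p1 : ℤ) + q1 - p2 - q2 - 2 * ξ)
    (hrs : r + s + q2 = p1) (htu : t + u + p2 = q1)
    (hi_anti : ∀ m m', m < m' → m' < r → i m' < i m)
    (hk_anti : ∀ m m', m < m' → m' < t → k m' < k m)
    (hj_anti : ∀ m m', m < m' → m' < s → j m' < j m)
    (hl_anti : ∀ m m', m < m' → m' < u → l m' < l m)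
    (hik_disj : Disjoint ((Finset.range r).image i) ((Finset.range t).image k))
    (hik_union : (Finset.range r).image i ∪ (Finset.range t).image k =
      (Finset.range (r + t)).image (fun m : ℕ => ((p2 : ℚ) + q2 + 1) / 2 + m))
    (hjl_disj : Disjoint ((Finset.range s).image j) ((Finset.range u).image l))
    (hjl_union : (Finset.range s).image j ∪ (Finset.range u).image l =
      (Finset.range (s + u)).image
        (fun m : ℕ => -((p1 : ℚ) + q1 - 1) / 2 + ξ + m))
    (sol : USol p1 p2 q1 q2 r s t u ξ i j k l) :
    (∀ m : ℕ, ∀ _ : m < r, ∀ hP : p2 + m < p1 + p2,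
      sol.vL ⟨p2 + m, hP⟩ = i m + (m + 1)) ∧
    (∀ m : ℕ, ∀ _ : m < s, ∀ hP : p2 + r + m < p1 + p2,
      sol.vL ⟨p2 + r + m, hP⟩ = j m + ((p1 : ℚ) + p2 - s + m + 1)) := by
  classical
  set N := p1 + p2 + q1 + q2 with hN
  set base : ℚ := ((p2 : ℚ) + q2 + 1) / 2 with hbase
  set Cq : ℚ := (ξ : ℚ) + ((q2 : ℚ) - p2) / 2 with hCq
  set Cq' : ℚ := (ξ : ℚ) + ((p2 : ℚ) - q2) / 2 with hCq'
  set botbase : ℚ := -((p1 : ℚ) + q1 - 1) / 2 + ξ with hbot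
  set F : ℕ → ℚ := fun e => ((p1 : ℚ) + p2 + q1 + q2 - 1) / 2 - e with hF
  set v1 : ℕ → ℚ := fun m => if h : m < p1 + p2 then sol.vL ⟨m, h⟩ else 0 with hv1
  set z1 : ℕ → ℚ := fun m => if h : m < p1 + p2 then sol.zL ⟨m, h⟩ else 0 with hz1
  set v2 : ℕ → ℚ := fun m => if h : m < q1 + q2 then sol.vR ⟨m, h⟩ else 0 with hv2
  set z2 : ℕ → ℚ := fun m => if h : m < q1 + q2 then sol.zR ⟨m, h⟩ else 0 with hz2
  have hv1eval : ∀ m (h : m < p1 + p2), v1 m = sol.vL ⟨m, h⟩ := by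
    intro m h; rw [hv1]; simp only [dif_pos h]
  have hz1eval : ∀ m (h : m < p1 + p2), z1 m = sol.zL ⟨m, h⟩ := by
    intro m h; rw [hz1]; simp only [dif_pos h]
  have hv2eval : ∀ m (h : m < q1 + q2), v2 m = sol.vR ⟨m, h⟩ := by
    intro m h; rw [hv2]; simp only [dif_pos h]
  have hz2eval : ∀ m (h : m < q1 + q2), z2 m = sol.zR ⟨m, h⟩ := by
    intro m h; rw [hz2]; simp only [dif_pos h]
  have hrtQ : 2 * ((r : ℚ) + t) = (p1 : ℚ) + q1 - p2 - q2 + 2 * ξ := by exact_mod_cast hrt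
  have hsuQ : 2 * ((s : ℚ) + u) = (p1 : ℚ) + q1 - p2 - q2 - 2 * ξ := by exact_mod_cast hsu
  have hξ3Q : (p1 : ℚ) + p2 ≤ (q1 : ℚ) + q2 + 2 * ξ := by exact_mod_cast hξ3
  have hξ4Q : (q1 : ℚ) + q2 ≤ (p1 : ℚ) + p2 + 2 * ξ := by exact_mod_cast hξ4
  have hrsQ : (r : ℚ) + s + q2 = p1 := by exact_mod_cast hrs
  have htuQ : (t : ℚ) + u + p2 = q1 := by exact_mod_cast htu
  have hCC : Cq' + (q2 : ℚ) = Cq + p2 := by rw [hCq, hCq']; ring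
  -- multiset identities over ranges
  have hm1 : Multiset.map v1 (Finset.range (p1 + p2)).val =
      Multiset.map (fun m => blockVec r (p2 + q2) (base + (r : ℚ)) i j m)
        (Finset.range (p1 + p2)).val := by
    rw [hv1, ← map_univ_eq_map_range sol.vL, ← map_univ_comp_val]
    exact sol.hvL
  have hm2 : Multiset.map v2 (Finset.range (q1 + q2)).val =
      Multiset.map (fun m => blockVec t (q2 + p2) (base + (t : ℚ)) k l m)
        (Finset.range (q1 + q2)).val := by
    rw [show q2 + p2 = p2 + q2 from by omega]
    rw [hv2, ← map_univ_eq_map_range sol.vR, ← map_univ_comp_val]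
    exact sol.hvR
  have hzsum : Multiset.map z1 (Finset.range (p1 + p2)).val
      + Multiset.map z2 (Finset.range (q1 + q2)).val
      = Multiset.map F (Finset.range N).val := by
    rw [hz1, hz2, hN, hF, ← map_univ_eq_map_range sol.zL, ← map_univ_eq_map_range sol.zR]
    exact sol.hz
  -- counting facts
  have hcnt1gt : ∀ x : ℚ, ((Finset.range (p2 + r + s + q2)).filter (fun m => x < v1 m)).card =
      ((Finset.range (p2 + r + s + q2)).filter
        (fun m => x < blockVec r (p2 + q2) (base + (r : ℚ)) i j m)).card := by
    intro x
    rw [show p2 + r + s + q2 = p1 + p2 from by omega]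
    exact card_filter_of_map_eq _ _ hm1 (fun y => x < y)
  have hcnt1lt : ∀ x : ℚ, ((Finset.range (p2 + r + s + q2)).filter (fun m => v1 m < x)).card =
      ((Finset.range (p2 + r + s + q2)).filter
        (fun m => blockVec r (p2 + q2) (base + (r : ℚ)) i j m < x)).card := by
    intro x
    rw [show p2 + r + s + q2 = p1 + p2 from by omega]
    exact card_filter_of_map_eq _ _ hm1 (fun y => y < x)
  have hcnt2gt : ∀ x : ℚ, ((Finset.range (q2 + t + u + p2)).filter (fun m => x < v2 m)).card =
      ((Finset.range (q2 + t + u + p2)).filter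
        (fun m => x < blockVec t (q2 + p2) (base + (t : ℚ)) k l m)).card := by
    intro x
    rw [show q2 + t + u + p2 = q1 + q2 from by omega]
    exact card_filter_of_map_eq _ _ hm2 (fun y => x < y)
  have hcnt2lt : ∀ x : ℚ, ((Finset.range (q2 + t + u + p2)).filter (fun m => v2 m < x)).card =
      ((Finset.range (q2 + t + u + p2)).filter
        (fun m => blockVec t (q2 + p2) (base + (t : ℚ)) k l m < x)).card := by
    intro x
    rw [show q2 + t + u + p2 = q1 + q2 from by omega]
    exact card_filter_of_map_eq _ _ hm2 (fun y => y < x)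
  have hstairge : ∀ x : ℚ,
      ((Finset.range (p1 + p2)).filter (fun m => x ≤ z1 m)).card
      + ((Finset.range (q1 + q2)).filter (fun m => x ≤ z2 m)).card
      = ((Finset.range N).filter (fun e => x ≤ F e)).card := by
    intro x
    exact card_filter_add_of_map_eq _ _ _ hzsum (fun y => x ≤ y)
  have hstairle : ∀ x : ℚ,
      ((Finset.range (p1 + p2)).filter (fun m => z1 m ≤ x)).card
      + ((Finset.range (q1 + q2)).filter (fun m => z2 m ≤ x)).card
      = ((Finset.range N).filter (fun e => F e ≤ x)).card := by
    intro x
    exact card_filter_add_of_map_eq _ _ _ hzsum (fun y => y ≤ x)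
  -- lattice membership of z-values
  have hlat1 : ∀ m, m < p1 + p2 → ∃ e : ℕ, e < N ∧ z1 m = F e := by
    intro m hm
    have hmem : z1 m ∈ Multiset.map F (Finset.range N).val := by
      rw [← hzsum]
      refine Multiset.mem_add.mpr (Or.inl ?_)
      rw [Multiset.mem_map]
      exact ⟨m, by simpa using hm, rfl⟩
    rw [Multiset.mem_map] at hmem
    obtain ⟨e, he, heq⟩ := hmem
    exact ⟨e, by simpa using he, heq.symm⟩
  have hlat2 : ∀ m, m < q1 + q2 → ∃ e : ℕ, e < N ∧ z2 m = F e := by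
    intro m hm
    have hmem : z2 m ∈ Multiset.map F (Finset.range N).val := by
      rw [← hzsum]
      refine Multiset.mem_add.mpr (Or.inr ?_)
      rw [Multiset.mem_map]
      exact ⟨m, by simpa using hm, rfl⟩
    rw [Multiset.mem_map] at hmem
    obtain ⟨e, he, heq⟩ := hmem
    exact ⟨e, by simpa using he, heq.symm⟩
  -- gap lemmas for z
  have hzgap1 : ∀ m d, m + d < p1 + p2 → z1 (m + d) + (d : ℚ) ≤ z1 m := by
    apply gap_lemma z1 (p1 + p2) (((p1 : ℚ) + p2 + q1 + q2 - 1) / 2)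
    · intro m m' h1 h2
      rw [hz1eval m (by omega), hz1eval m' h2]
      exact sol.zL_anti (by simp [Fin.mk_lt_mk]; omega)
    · intro m hm
      obtain ⟨e, _, heq⟩ := hlat1 m hm
      exact ⟨-(e : ℤ), by rw [heq, hF]; push_cast; ring⟩
  have hzgap2 : ∀ m d, m + d < q1 + q2 → z2 (m + d) + (d : ℚ) ≤ z2 m := by
    apply gap_lemma z2 (q1 + q2) (((p1 : ℚ) + p2 + q1 + q2 - 1) / 2)
    · intro m m' h1 h2
      rw [hz2eval m (by omega), hz2eval m' h2]
      exact sol.zR_anti (by simp [Fin.mk_lt_mk]; omega)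
    · intro m hm
      obtain ⟨e, _, heq⟩ := hlat2 m hm
      exact ⟨-(e : ℤ), by rw [heq, hF]; push_cast; ring⟩
  -- lattice membership for i j k l
  have hilat : ∀ m, m < r → ∃ e : ℕ, e < r + t ∧ i m = base + e := by
    intro m hm
    have hmem : i m ∈ (Finset.range r).image i ∪ (Finset.range t).image k :=
      Finset.mem_union_left _ (Finset.mem_image_of_mem i (Finset.mem_range.mpr hm))
    rw [hik_union, Finset.mem_image] at hmem
    obtain ⟨e, he, heq⟩ := hmem
    exact ⟨e, Finset.mem_range.mp he, heq.symm⟩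
  have hklat : ∀ m, m < t → ∃ e : ℕ, e < r + t ∧ k m = base + e := by
    intro m hm
    have hmem : k m ∈ (Finset.range r).image i ∪ (Finset.range t).image k :=
      Finset.mem_union_right _ (Finset.mem_image_of_mem k (Finset.mem_range.mpr hm))
    rw [hik_union, Finset.mem_image] at hmem
    obtain ⟨e, he, heq⟩ := hmem
    exact ⟨e, Finset.mem_range.mp he, heq.symm⟩
  have hjlat : ∀ m, m < s → ∃ e : ℕ, e < s + u ∧ j m = botbase + e := by
    intro m hm
    have hmem : j m ∈ (Finset.range s).image j ∪ (Finset.range u).image l :=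
      Finset.mem_union_left _ (Finset.mem_image_of_mem j (Finset.mem_range.mpr hm))
    rw [hjl_union, Finset.mem_image] at hmem
    obtain ⟨e, he, heq⟩ := hmem
    exact ⟨e, Finset.mem_range.mp he, heq.symm⟩
  have hllat : ∀ m, m < u → ∃ e : ℕ, e < s + u ∧ l m = botbase + e := by
    intro m hm
    have hmem : l m ∈ (Finset.range s).image j ∪ (Finset.range u).image l :=
      Finset.mem_union_right _ (Finset.mem_image_of_mem l (Finset.mem_range.mpr hm))
    rw [hjl_union, Finset.mem_image] at hmem
    obtain ⟨e, he, heq⟩ := hmem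
    exact ⟨e, Finset.mem_range.mp he, heq.symm⟩
  -- gap lemmas for i j k l
  have higap : ∀ m d, m + d < r → i (m + d) + (d : ℚ) ≤ i m := by
    apply gap_lemma i r base
    · exact fun m m' h1 h2 => hi_anti m m' h1 h2
    · intro m hm
      obtain ⟨e, _, heq⟩ := hilat m hm
      exact ⟨(e : ℤ), by rw [heq]; push_cast; ring⟩
  have hkgap : ∀ m d, m + d < t → k (m + d) + (d : ℚ) ≤ k m := by
    apply gap_lemma k t base
    · exact fun m m' h1 h2 => hk_anti m m' h1 h2
    · intro m hm
      obtain ⟨e, _, heq⟩ := hklat m hm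
      exact ⟨(e : ℤ), by rw [heq]; push_cast; ring⟩
  have hjgap : ∀ m d, m + d < s → j (m + d) + (d : ℚ) ≤ j m := by
    apply gap_lemma j s botbase
    · exact fun m m' h1 h2 => hj_anti m m' h1 h2
    · intro m hm
      obtain ⟨e, _, heq⟩ := hjlat m hm
      exact ⟨(e : ℤ), by rw [heq]; push_cast; ring⟩
  have hlgap : ∀ m d, m + d < u → l (m + d) + (d : ℚ) ≤ l m := by
    apply gap_lemma l u botbase
    · exact fun m m' h1 h2 => hl_anti m m' h1 h2
    · intro m hm
      obtain ⟨e, _, heq⟩ := hllat m hm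
      exact ⟨(e : ℤ), by rw [heq]; push_cast; ring⟩
  -- bounds for i j k l
  have hIlb1 : ∀ m, m < r → base + (r : ℚ) - 1 - m ≤ i m := by
    intro m hm
    obtain ⟨e, _, heq⟩ := hilat (r - 1) (by omega)
    have h1 := higap m (r - 1 - m) (by omega)
    rw [show m + (r - 1 - m) = r - 1 from by omega] at h1
    rw [nat_cast_sub_q (r - 1) m (by omega), nat_cast_sub_q r 1 (by omega)] at h1
    push_cast at h1
    have h2 : base ≤ i (r - 1) := by
      rw [heq]; have : (0 : ℚ) ≤ (e : ℚ) := Nat.cast_nonneg e; linarith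
    linarith
  have hIlb2 : ∀ m, m < t → base + (t : ℚ) - 1 - m ≤ k m := by
    intro m hm
    obtain ⟨e, _, heq⟩ := hklat (t - 1) (by omega)
    have h1 := hkgap m (t - 1 - m) (by omega)
    rw [show m + (t - 1 - m) = t - 1 from by omega] at h1
    rw [nat_cast_sub_q (t - 1) m (by omega), nat_cast_sub_q t 1 (by omega)] at h1
    push_cast at h1
    have h2 : base ≤ k (t - 1) := by
      rw [heq]; have : (0 : ℚ) ≤ (e : ℚ) := Nat.cast_nonneg e; linarith
    linarith
  have hbotmax : botbase + ((s : ℚ) + u) - 1 = -base := by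
    rw [hbot, hbase]; linarith [hsuQ]
  have hJub1 : ∀ c, c < s → j c ≤ -base - c := by
    intro c hc
    obtain ⟨e, he, heq⟩ := hjlat 0 (by omega)
    have h1 := hjgap 0 c (by omega)
    rw [show 0 + c = c from by omega] at h1
    have h2 : j 0 ≤ botbase + ((s : ℚ) + u) - 1 := by
      rw [heq]
      have : (e : ℚ) ≤ (s : ℚ) + u - 1 := by
        have : (e : ℚ) + 1 ≤ ((s + u : ℕ) : ℚ) := by exact_mod_cast he
        push_cast at this; linarith
      linarith
    rw [hbotmax] at h2
    linarith
  have hJub2 : ∀ c, c < u → l c ≤ -base - c := by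
    intro c hc
    obtain ⟨e, he, heq⟩ := hllat 0 (by omega)
    have h1 := hlgap 0 c (by omega)
    rw [show 0 + c = c from by omega] at h1
    have h2 : l 0 ≤ botbase + ((s : ℚ) + u) - 1 := by
      rw [heq]
      have : (e : ℚ) ≤ (s : ℚ) + u - 1 := by
        have : (e : ℚ) + 1 ≤ ((s + u : ℕ) : ℚ) := by exact_mod_cast he
        push_cast at this; linarith
      linarith
    rw [hbotmax] at h2
    linarith
  -- v/z relations from the mu equations
  have hveq1 : ∀ m, p2 ≤ m → m < p2 + r + s → v1 m = Cq + ((m : ℚ) + 1) + z1 m := by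
    intro m h1 h2
    have hm : m < p1 + p2 := by omega
    rw [hv1eval m hm, hz1eval m hm, sol.heqL ⟨m, hm⟩]
    show muLeft p1 q1 p2 q2 r s ξ sol.b sol.a m + _ = _
    simp only [muLeft]
    rw [dif_neg (by omega : ¬ m < p2), if_pos (by omega : m < p2 + r + s)]
  have hvub1 : ∀ m, m < p2 + r + s → v1 m ≤ Cq + ((m : ℚ) + 1) + z1 m := by
    intro m h2
    rcases lt_or_ge m p2 with hm2 | hm2
    · have hm : m < p1 + p2 := by omega
      rw [hv1eval m hm, hz1eval m hm, sol.heqL ⟨m, hm⟩]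
      show muLeft p1 q1 p2 q2 r s ξ sol.b sol.a m + _ ≤ _
      simp only [muLeft]
      rw [dif_pos hm2]
      have hb : (0 : ℚ) ≤ ((sol.b ⟨m, hm2⟩ : ℤ) : ℚ) := by
        exact_mod_cast sol.b_nonneg ⟨m, hm2⟩
      rw [hCq]
      linarith [hξ3Q]
    · exact le_of_eq (hveq1 m hm2 h2)
  have hvlb1 : ∀ m, p2 ≤ m → m < p1 + p2 → Cq + ((m : ℚ) + 1) + z1 m ≤ v1 m := by
    intro m h1 hm
    rcases lt_or_ge m (p2 + r + s) with hm2 | hm2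
    · exact le_of_eq (hveq1 m h1 hm2).symm
    · rw [hv1eval m hm, hz1eval m hm, sol.heqL ⟨m, hm⟩]
      show _ ≤ muLeft p1 q1 p2 q2 r s ξ sol.b sol.a m + _
      simp only [muLeft]
      rw [dif_neg (by omega : ¬ m < p2), if_neg (by omega : ¬ m < p2 + r + s),
        dif_pos (by omega : p2 + r + s + q2 - 1 - m < q2)]
      have ha : (0 : ℚ) ≤ ((sol.a ⟨p2 + r + s + q2 - 1 - m, by omega⟩ : ℤ) : ℚ) := by
        exact_mod_cast sol.a_nonneg _
      rw [hCq]
      linarith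
  have hveq2 : ∀ m, q2 ≤ m → m < q2 + t + u → v2 m = Cq' + ((m : ℚ) + 1) + z2 m := by
    intro m h1 h2
    have hm : m < q1 + q2 := by omega
    rw [hv2eval m hm, hz2eval m hm, sol.heqR ⟨m, hm⟩]
    show muRight p1 q1 p2 q2 t u ξ sol.b sol.a m + _ = _
    simp only [muRight]
    rw [dif_neg (by omega : ¬ m < q2), if_pos (by omega : m < q2 + t + u)]
  have hvub2 : ∀ m, m < q2 + t + u → v2 m ≤ Cq' + ((m : ℚ) + 1) + z2 m := by
    intro m h2
    rcases lt_or_ge m q2 with hm2 | hm2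
    · have hm : m < q1 + q2 := by omega
      rw [hv2eval m hm, hz2eval m hm, sol.heqR ⟨m, hm⟩]
      show muRight p1 q1 p2 q2 t u ξ sol.b sol.a m + _ ≤ _
      simp only [muRight]
      rw [dif_pos hm2]
      have ha : (0 : ℚ) ≤ ((sol.a ⟨m, hm2⟩ : ℤ) : ℚ) := by
        exact_mod_cast sol.a_nonneg ⟨m, hm2⟩
      rw [hCq']
      linarith [hξ4Q]
    · exact le_of_eq (hveq2 m hm2 h2)
  have hvlb2 : ∀ m, q2 ≤ m → m < q1 + q2 → Cq' + ((m : ℚ) + 1) + z2 m ≤ v2 m := by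
    intro m h1 hm
    rcases lt_or_ge m (q2 + t + u) with hm2 | hm2
    · exact le_of_eq (hveq2 m h1 hm2).symm
    · rw [hv2eval m hm, hz2eval m hm, sol.heqR ⟨m, hm⟩]
      show _ ≤ muRight p1 q1 p2 q2 t u ξ sol.b sol.a m + _
      simp only [muRight]
      rw [dif_neg (by omega : ¬ m < q2), if_neg (by omega : ¬ m < q2 + t + u),
        dif_pos (by omega : q2 + t + u + p2 - 1 - m < p2)]
      have hb : (0 : ℚ) ≤ ((sol.b ⟨q2 + t + u + p2 - 1 - m, by omega⟩ : ℤ) : ℚ) := by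
        exact_mod_cast sol.b_nonneg _
      rw [hCq']
      linarith
  -- wrapped versions matching the block lemmas' index ranges
  have hvlb1' : ∀ m, p2 ≤ m → m < p2 + r + s + q2 → Cq + ((m : ℚ) + 1) + z1 m ≤ v1 m :=
    fun m h1 h2 => hvlb1 m h1 (by omega)
  have hzgap1' : ∀ m d, m + d < p2 + r + s + q2 → z1 (m + d) + (d : ℚ) ≤ z1 m :=
    fun m d h => hzgap1 m d (by omega)
  have hvlb2' : ∀ m, q2 ≤ m → m < q2 + t + u + p2 → Cq' + ((m : ℚ) + 1) + z2 m ≤ v2 m :=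
    fun m h1 h2 => hvlb2 m h1 (by omega)
  have hzgap2' : ∀ m d, m + d < q2 + t + u + p2 → z2 (m + d) + (d : ℚ) ≤ z2 m :=
    fun m d h => hzgap2 m d (by omega)
  have hbase2 : base = ((q2 : ℚ) + p2 + 1) / 2 := by rw [hbase]; ring
  -- block lemma instances
  have B1L := blk_B1 p2 r s q2 base Cq i j v1 z1 hbase hvub1 hvlb1' hzgap1' higap hIlb1
    hJub1 hcnt1gt
  have B2L := blk_B2 p2 r s q2 base Cq i j v1 z1 hbase hvub1 hvlb1' hzgap1' hjgap hIlb1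
    hJub1 hcnt1lt
  have B1R := blk_B1 q2 t u p2 base Cq' k l v2 z2 hbase2 hvub2 hvlb2' hzgap2' hkgap hIlb2
    hJub2 hcnt2gt
  have B2R := blk_B2 q2 t u p2 base Cq' k l v2 z2 hbase2 hvub2 hvlb2' hzgap2' hlgap hIlb2
    hJub2 hcnt2lt
  have B3R := blk_B3 q2 t u p2 base k l v2 hbase2 hIlb2 hJub2 hcnt2gt
  have B4R := blk_B4 q2 t u p2 base k l v2 hbase2 hIlb2 hcnt2lt
  -- G1 : head-window lower bounds for z1 (cross-block capacity argument)
  have G1 : ∀ n0, n0 < r → i n0 - Cq - (p2 : ℚ) ≤ z1 (p2 + n0) := by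
    intro n0 hn0
    by_contra hcon
    push_neg at hcon
    set κ := ((Finset.range t).filter (fun m' => i n0 < k m')).card with hκ
    have hκt : κ ≤ t := by
      rw [hκ]
      exact le_trans (Finset.card_le_card (Finset.filter_subset _ _)) (by simp)
    have hdck : ∀ m m', m ≤ m' → m' < t → i n0 < k m' → i n0 < k m := by
      intro m m' hmm' hm't hp
      rcases eq_or_lt_of_le hmm' with hEq | hlt
      · rwa [hEq]
      · exact lt_trans hp (hk_anti m m' hlt hm't)
    have κiff0 := filter_range_iff t (fun m' => i n0 < k m') hdck
    rw [← hκ] at κiff0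
    have κiff : ∀ m', m' < t → (i n0 < k m' ↔ m' < κ) := fun m' hm' => κiff0 m' hm'
    obtain ⟨e0, he0, hie⟩ := hilat n0 hn0
    have hinj_base : Set.InjOn (fun e : ℕ => base + (e : ℚ)) ↑(Finset.range (r + t)) := by
      intro x _ y _ hxy
      simp only at hxy
      have h1 : (x : ℚ) = y := by linarith
      exact_mod_cast h1
    have hinj_i : Set.InjOn i ↑(Finset.range r) := by
      intro x hx y hy hxy
      simp only [Finset.coe_range, Set.mem_Iio] at hx hy
      rcases lt_trichotomy x y with h | h | h
      · exact absurd hxy (ne_of_gt (hi_anti x y h hy))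
      · exact h
      · exact absurd hxy (ne_of_lt (hi_anti y x h hx))
    have hinj_k : Set.InjOn k ↑(Finset.range t) := by
      intro x hx y hy hxy
      simp only [Finset.coe_range, Set.mem_Iio] at hx hy
      rcases lt_trichotomy x y with h | h | h
      · exact absurd hxy (ne_of_gt (hk_anti x y h hy))
      · exact h
      · exact absurd hxy (ne_of_lt (hk_anti y x h hx))
    have hrank : n0 + κ + e0 + 1 = r + t := by
      have hAcard : (((Finset.range r).image i).filter (fun x => i n0 < x)).card = n0 := by
        rw [Finset.filter_image,
          Finset.card_image_of_injOn (hinj_i.mono (Finset.coe_subset.mpr (Finset.filter_subset _ _)))]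
        have hfeq : (Finset.range r).filter (fun m => i n0 < i m) = Finset.range n0 := by
          ext x
          simp only [Finset.mem_filter, Finset.mem_range]
          constructor
          · rintro ⟨h1, h2⟩
            by_contra hc
            push_neg at hc
            rcases eq_or_lt_of_le hc with hEq | hlt
            · rw [← hEq] at h2; exact absurd h2 (lt_irrefl _)
            · exact absurd h2 (not_lt_of_gt (hi_anti n0 x hlt h1))
          · intro hlt
            exact ⟨by omega, hi_anti x n0 hlt hn0⟩
        rw [hfeq, Finset.card_range]
      have hBcard : (((Finset.range t).image k).filter (fun x => i n0 < x)).card = κ := by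
        rw [Finset.filter_image,
          Finset.card_image_of_injOn (hinj_k.mono (Finset.coe_subset.mpr (Finset.filter_subset _ _)))]
      have hUcard : (((Finset.range (r + t)).image (fun e : ℕ => base + (e : ℚ))).filter
          (fun x => i n0 < x)).card = r + t - 1 - e0 := by
        rw [Finset.filter_image,
          Finset.card_image_of_injOn (hinj_base.mono (Finset.coe_subset.mpr (Finset.filter_subset _ _)))]
        have hfeq : (Finset.range (r + t)).filter (fun e : ℕ => i n0 < base + (e : ℚ))
            = Finset.Ico (e0 + 1) (r + t) := by
          ext x
          simp only [Finset.mem_filter, Finset.mem_range, Finset.mem_Ico]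
          rw [hie]
          constructor
          · rintro ⟨h1, h2⟩
            have h3 : (e0 : ℚ) < x := by linarith
            have h4 : e0 < x := by exact_mod_cast h3
            omega
          · intro hx
            have h3 : (e0 : ℚ) < x := by exact_mod_cast hx.1
            exact ⟨hx.2, by linarith⟩
        rw [hfeq, Nat.card_Ico]
        omega
      have h1 : (((Finset.range r).image i ∪ (Finset.range t).image k).filter
          (fun x => i n0 < x)).card = n0 + κ := by
        rw [Finset.filter_union,
          Finset.card_union_of_disjoint
            (hik_disj.mono (Finset.filter_subset _ _) (Finset.filter_subset _ _)),
          hAcard, hBcard]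
      rw [hik_union] at h1
      have h2 := hUcard.symm.trans h1
      omega
    set E0 := p2 + q2 + n0 + κ with hE0
    have hE0N : E0 < N := by rw [hE0, hN]; omega
    set lev : ℚ := i n0 - Cq - (p2 : ℚ) with hlev
    have hrankQ : (n0 : ℚ) + κ + e0 + 1 = (r : ℚ) + t := by exact_mod_cast hrank
    have hlevF : lev = F E0 := by
      simp only [hF, hE0]
      rw [hlev, hie, hCq, hbase]
      push_cast
      linarith [hrtQ]
    obtain ⟨e, heN, hez⟩ := hlat1 (p2 + n0) (by omega)
    have heE0 : E0 < e := by
      by_contra hc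
      push_neg at hc
      have h1 : (e : ℚ) ≤ (E0 : ℚ) := by exact_mod_cast hc
      rw [hez, hlevF] at hcon
      simp only [hF] at hcon
      linarith
    have hz1top : z1 (p2 + n0) ≤ lev - 1 := by
      have h1 : (E0 : ℚ) + 1 ≤ (e : ℚ) := by exact_mod_cast heE0
      rw [hez, hlevF]
      simp only [hF]
      linarith
    have c1 : ((Finset.range (p1 + p2)).filter (fun m => lev ≤ z1 m)).card ≤ p2 + n0 := by
      have hsub : (Finset.range (p1 + p2)).filter (fun m => lev ≤ z1 m)
          ⊆ Finset.range (p2 + n0) := by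
        intro x hx
        rw [Finset.mem_filter, Finset.mem_range] at hx
        rw [Finset.mem_range]
        by_contra hc
        push_neg at hc
        have h1 := hzgap1 (p2 + n0) (x - (p2 + n0)) (by omega)
        rw [show p2 + n0 + (x - (p2 + n0)) = x from by omega] at h1
        have h2 : (0 : ℚ) ≤ ((x - (p2 + n0) : ℕ) : ℚ) := Nat.cast_nonneg _
        linarith [hx.2, hz1top]
      have := Finset.card_le_card hsub
      rwa [Finset.card_range] at this
    have hn0Q : (n0 : ℚ) + 1 ≤ (r : ℚ) := by exact_mod_cast hn0
    have c2 : ((Finset.range (q1 + q2)).filter (fun m => lev ≤ z2 m)).card ≤ q2 + κ := by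
      have hsub : (Finset.range (q1 + q2)).filter (fun m => lev ≤ z2 m)
          ⊆ Finset.range (q2 + κ) := by
        intro x hx
        rw [Finset.mem_filter, Finset.mem_range] at hx
        rw [Finset.mem_range]
        by_contra hc
        push_neg at hc
        rcases lt_or_ge x (q2 + t) with hxt | hxt
        · have hm't : x - q2 < t := by omega
          have hknot : ¬ (i n0 < k (x - q2)) := by
            rw [κiff (x - q2) hm't]
            omega
          push_neg at hknot
          obtain ⟨e1, he1, hke⟩ := hklat (x - q2) hm't
          have hne : k (x - q2) ≠ i n0 := by
            intro hEq
            have h1 : i n0 ∈ (Finset.range r).image i :=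
              Finset.mem_image_of_mem i (Finset.mem_range.mpr hn0)
            have h2 : i n0 ∈ (Finset.range t).image k := by
              rw [← hEq]
              exact Finset.mem_image_of_mem k (Finset.mem_range.mpr hm't)
            exact Finset.disjoint_left.mp hik_disj h1 h2
          have hki : k (x - q2) ≤ i n0 - 1 := by
            have h3 : e1 ≠ e0 := by
              intro hEq; apply hne; rw [hke, hie, hEq]
            have h4 : (e1 : ℚ) ≤ (e0 : ℚ) := by
              rw [hke, hie] at hknot; linarith
            have h5 : e1 < e0 := by
              have h6 : e1 ≤ e0 := by exact_mod_cast h4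
              omega
            have h6 : (e1 : ℚ) + 1 ≤ e0 := by exact_mod_cast h5
            rw [hke, hie]; linarith
          have hB1 := B1R (x - q2) hm't
          rw [show q2 + (x - q2) = x from by omega] at hB1
          rw [nat_cast_sub_q x q2 (by omega)] at hB1
          have hlb := hvlb2 x (by omega) (by omega)
          have hzx := hx.2
          rw [hlev] at hzx
          linarith [hCC, hB1, hlb, hzx, hki]
        · have hsubW : Finset.Ico q2 (x + 1) ⊆
              (Finset.range (q2 + t + u + p2)).filter (fun m => base + (t : ℚ) < v2 m) := by
            intro y hy
            rw [Finset.mem_Ico] at hy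
            rw [Finset.mem_filter, Finset.mem_range]
            refine ⟨by omega, ?_⟩
            have h1 := hvlb2 y (by omega) (by omega)
            have h2 := hzgap2 y (x - y) (by omega)
            rw [show y + (x - y) = x from by omega] at h2
            rw [nat_cast_sub_q x y (by omega)] at h2
            have h3 := hIlb1 n0 hn0
            have hzx := hx.2
            rw [hlev] at hzx
            have hxq : (q2 : ℚ) + t ≤ (x : ℚ) := by exact_mod_cast hxt
            linarith [hCC]
          have hcard := Finset.card_le_card hsubW
          rw [Nat.card_Ico] at hcard
          omega
      have := Finset.card_le_card hsub
      rwa [Finset.card_range] at this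
    have c3 : ((Finset.range N).filter (fun e' => lev ≤ F e')).card = E0 + 1 := by
      have heq2 : (Finset.range N).filter (fun e' => lev ≤ F e') = Finset.range (E0 + 1) := by
        ext x
        simp only [Finset.mem_filter, Finset.mem_range]
        constructor
        · rintro ⟨h1, h2⟩
          rw [hlevF] at h2
          simp only [hF] at h2
          have h3 : (x : ℚ) ≤ E0 := by linarith
          have h4 : x ≤ E0 := by exact_mod_cast h3
          omega
        · intro hx
          refine ⟨by omega, ?_⟩
          rw [hlevF]
          simp only [hF]
          have h3 : x ≤ E0 := by omega
          have h4 : (x : ℚ) ≤ E0 := by exact_mod_cast h3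
          linarith
      rw [heq2, Finset.card_range]
    have hsum := hstairge lev
    rw [c3] at hsum
    omega
  -- G2 : tail-window upper bounds for z1 (mirror capacity argument)
  have G2 : ∀ c0, c0 < s → z1 (p2 + r + c0) ≤ j c0 + (q2 : ℚ) - Cq := by
    intro c0 hc0
    by_contra hcon
    push_neg at hcon
    set θ : ℚ := j c0 + (q2 : ℚ) - Cq with hθ
    set lam := ((Finset.range u).filter (fun c' => j c0 < l c')).card with hlam
    have hlamu : lam ≤ u := by
      rw [hlam]
      exact le_trans (Finset.card_le_card (Finset.filter_subset _ _)) (by simp)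
    have hdcl : ∀ m m', m ≤ m' → m' < u → j c0 < l m' → j c0 < l m := by
      intro m m' hmm' hm'u hp
      rcases eq_or_lt_of_le hmm' with hEq | hlt
      · rwa [hEq]
      · exact lt_trans hp (hl_anti m m' hlt hm'u)
    have lamiff0 := filter_range_iff u (fun c' => j c0 < l c') hdcl
    rw [← hlam] at lamiff0
    have lamiff : ∀ c', c' < u → (j c0 < l c' ↔ c' < lam) := fun c' hc' => lamiff0 c' hc'
    have hjlne : ∀ c', c' < u → l c' ≠ j c0 := by
      intro c' hc' hEq
      have h1 : j c0 ∈ (Finset.range s).image j :=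
        Finset.mem_image_of_mem j (Finset.mem_range.mpr hc0)
      have h2 : j c0 ∈ (Finset.range u).image l := by
        rw [← hEq]
        exact Finset.mem_image_of_mem l (Finset.mem_range.mpr hc')
      exact Finset.disjoint_left.mp hjl_disj h1 h2
    obtain ⟨f0, hf0, hjf⟩ := hjlat c0 hc0
    have hinj_bot : Set.InjOn (fun e : ℕ => botbase + (e : ℚ)) ↑(Finset.range (s + u)) := by
      intro x _ y _ hxy
      simp only at hxy
      have h1 : (x : ℚ) = y := by linarith
      exact_mod_cast h1
    have hinj_j : Set.InjOn j ↑(Finset.range s) := by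
      intro x hx y hy hxy
      simp only [Finset.coe_range, Set.mem_Iio] at hx hy
      rcases lt_trichotomy x y with h | h | h
      · exact absurd hxy (ne_of_gt (hj_anti x y h hy))
      · exact h
      · exact absurd hxy (ne_of_lt (hj_anti y x h hx))
    have hinj_l : Set.InjOn l ↑(Finset.range u) := by
      intro x hx y hy hxy
      simp only [Finset.coe_range, Set.mem_Iio] at hx hy
      rcases lt_trichotomy x y with h | h | h
      · exact absurd hxy (ne_of_gt (hl_anti x y h hy))
      · exact h
      · exact absurd hxy (ne_of_lt (hl_anti y x h hx))
    have hrankb : f0 = s - c0 - 1 + (u - lam) := by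
      have hAcard : (((Finset.range s).image j).filter (fun x => x < j c0)).card = s - c0 - 1 := by
        rw [Finset.filter_image,
          Finset.card_image_of_injOn (hinj_j.mono (Finset.coe_subset.mpr (Finset.filter_subset _ _)))]
        have hfeq : (Finset.range s).filter (fun m => j m < j c0) = Finset.Ico (c0 + 1) s := by
          ext x
          simp only [Finset.mem_filter, Finset.mem_range, Finset.mem_Ico]
          constructor
          · rintro ⟨h1, h2⟩
            refine ⟨?_, h1⟩
            by_contra hc
            push_neg at hc
            have hc' : x ≤ c0 := by omega
            rcases eq_or_lt_of_le hc' with hEq | hlt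
            · rw [hEq] at h2; exact absurd h2 (lt_irrefl _)
            · exact absurd h2 (not_lt_of_gt (hj_anti x c0 hlt hc0))
          · rintro ⟨h1, h2⟩
            exact ⟨h2, hj_anti c0 x (by omega) h2⟩
        rw [hfeq, Nat.card_Ico]
        omega
      have hBcard : (((Finset.range u).image l).filter (fun x => x < j c0)).card = u - lam := by
        rw [Finset.filter_image,
          Finset.card_image_of_injOn (hinj_l.mono (Finset.coe_subset.mpr (Finset.filter_subset _ _)))]
        have hfeq : (Finset.range u).filter (fun c' => l c' < j c0) = Finset.Ico lam u := by
          ext x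
          simp only [Finset.mem_filter, Finset.mem_range, Finset.mem_Ico]
          constructor
          · rintro ⟨h1, h2⟩
            refine ⟨?_, h1⟩
            by_contra hc
            push_neg at hc
            have h3 := (lamiff x h1).mpr hc
            linarith
          · rintro ⟨h1, h2⟩
            refine ⟨h2, ?_⟩
            have hnot : ¬ j c0 < l x := by
              intro hgt
              have h3 := (lamiff x h2).mp hgt
              omega
            push_neg at hnot
            exact lt_of_le_of_ne hnot (hjlne x h2)
        rw [hfeq, Nat.card_Ico]
      have hUcard : (((Finset.range (s + u)).image (fun e : ℕ => botbase + (e : ℚ))).filter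
          (fun x => x < j c0)).card = f0 := by
        rw [Finset.filter_image,
          Finset.card_image_of_injOn (hinj_bot.mono (Finset.coe_subset.mpr (Finset.filter_subset _ _)))]
        have hfeq : (Finset.range (s + u)).filter (fun e : ℕ => botbase + (e : ℚ) < j c0)
            = Finset.range f0 := by
          ext x
          simp only [Finset.mem_filter, Finset.mem_range]
          rw [hjf]
          constructor
          · rintro ⟨h1, h2⟩
            have h3 : (x : ℚ) < f0 := by linarith
            exact_mod_cast h3
          · intro hx
            refine ⟨by omega, ?_⟩
            have h3 : (x : ℚ) < f0 := by exact_mod_cast hx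
            linarith
        rw [hfeq, Finset.card_range]
      have h1 : (((Finset.range s).image j ∪ (Finset.range u).image l).filter
          (fun x => x < j c0)).card = s - c0 - 1 + (u - lam) := by
        rw [Finset.filter_union,
          Finset.card_union_of_disjoint
            (hjl_disj.mono (Finset.filter_subset _ _) (Finset.filter_subset _ _)),
          hAcard, hBcard]
      rw [hjl_union] at h1
      exact hUcard.symm.trans h1
    set R0 := p1 + q1 - f0 - 1 with hR0
    have hR0cast : (R0 : ℚ) = (p1 : ℚ) + q1 - f0 - 1 := by
      have h1 : R0 + f0 + 1 = p1 + q1 := by rw [hR0]; omega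
      have h2 := congrArg (fun y : ℕ => (y : ℚ)) h1
      push_cast at h2
      linarith
    have hθF : θ = F R0 := by
      simp only [hF]
      rw [hθ, hjf, hbot, hCq, hR0cast]
      push_cast
      linarith
    obtain ⟨e, heN, hez⟩ := hlat1 (p2 + r + c0) (by omega)
    have heR0 : e < R0 := by
      by_contra hc
      push_neg at hc
      have h1 : (R0 : ℚ) ≤ (e : ℚ) := by exact_mod_cast hc
      rw [hez, hθF] at hcon
      simp only [hF] at hcon
      linarith
    have hz1bot : θ + 1 ≤ z1 (p2 + r + c0) := by
      have h1 : (e : ℚ) + 1 ≤ (R0 : ℚ) := by exact_mod_cast heR0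
      rw [hez, hθF]
      simp only [hF]
      linarith
    have c1' : ((Finset.range (p1 + p2)).filter (fun m => z1 m ≤ θ)).card
        ≤ p1 + p2 - (p2 + r + c0 + 1) := by
      have hsub : (Finset.range (p1 + p2)).filter (fun m => z1 m ≤ θ)
          ⊆ Finset.Ico (p2 + r + c0 + 1) (p1 + p2) := by
        intro x hx
        rw [Finset.mem_filter, Finset.mem_range] at hx
        rw [Finset.mem_Ico]
        refine ⟨?_, hx.1⟩
        by_contra hc
        push_neg at hc
        have h1 := hzgap1 x (p2 + r + c0 - x) (by omega)
        rw [show x + (p2 + r + c0 - x) = p2 + r + c0 from by omega] at h1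
        have h2 : (0 : ℚ) ≤ ((p2 + r + c0 - x : ℕ) : ℚ) := Nat.cast_nonneg _
        linarith [hx.2, hz1bot]
      have := Finset.card_le_card hsub
      rwa [Nat.card_Ico] at this
    have c2' : ((Finset.range (q1 + q2)).filter (fun m => z2 m ≤ θ)).card
        ≤ q1 + q2 - (q2 + t + lam) := by
      have hsub : (Finset.range (q1 + q2)).filter (fun m => z2 m ≤ θ)
          ⊆ Finset.Ico (q2 + t + lam) (q1 + q2) := by
        intro x hx
        rw [Finset.mem_filter, Finset.mem_range] at hx
        rw [Finset.mem_Ico]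
        refine ⟨?_, hx.1⟩
        by_contra hc
        push_neg at hc
        rcases le_or_gt (q2 + t) x with hxt | hxt
        · have hd : x - (q2 + t) < lam := by omega
          have hdu : x - (q2 + t) < u := by omega
          have hlgt : j c0 < l (x - (q2 + t)) := (lamiff (x - (q2 + t)) hdu).mpr hd
          obtain ⟨e1, he1, hle⟩ := hllat (x - (q2 + t)) hdu
          have hlge : j c0 + 1 ≤ l (x - (q2 + t)) := by
            have h3 : (f0 : ℚ) < e1 := by
              rw [hle, hjf] at hlgt; linarith
            have h4 : f0 < e1 := by exact_mod_cast h3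
            have h5 : (f0 : ℚ) + 1 ≤ e1 := by exact_mod_cast h4
            rw [hle, hjf]; linarith
          have hB2 := B2R (x - (q2 + t)) hdu
          rw [show q2 + t + (x - (q2 + t)) = x from by omega] at hB2
          rw [nat_cast_sub_q x (q2 + t) (by omega)] at hB2
          push_cast at hB2
          have hub := hvub2 x (by omega)
          have hzx := hx.2
          rw [hθ] at hzx
          linarith [hCC]
        · have hsubW : Finset.Ico x (q2 + t + u) ⊆
              (Finset.range (q2 + t + u + p2)).filter (fun m => v2 m < base + (t : ℚ)) := by
            intro y hy
            rw [Finset.mem_Ico] at hy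
            rw [Finset.mem_filter, Finset.mem_range]
            refine ⟨by omega, ?_⟩
            have h1 := hvub2 y (by omega)
            have h2 := hzgap2 x (y - x) (by omega)
            rw [show x + (y - x) = y from by omega] at h2
            rw [nat_cast_sub_q y x (by omega)] at h2
            have h3 := hJub1 c0 hc0
            have hzx := hx.2
            rw [hθ] at hzx
            have hxq : (x : ℚ) + 1 ≤ (q2 : ℚ) + t := by exact_mod_cast hxt
            linarith [hCC, hbase]
          have hcard := Finset.card_le_card hsubW
          rw [Nat.card_Ico] at hcard
          omega
      have := Finset.card_le_card hsub
      rwa [Nat.card_Ico] at this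
    have c3' : ((Finset.range N).filter (fun e' => F e' ≤ θ)).card = N - R0 := by
      have heq2 : (Finset.range N).filter (fun e' => F e' ≤ θ) = Finset.Ico R0 N := by
        ext x
        simp only [Finset.mem_filter, Finset.mem_range, Finset.mem_Ico]
        constructor
        · rintro ⟨h1, h2⟩
          rw [hθF] at h2
          simp only [hF] at h2
          have h3 : (R0 : ℚ) ≤ x := by linarith
          have h4 : R0 ≤ x := by exact_mod_cast h3
          omega
        · rintro ⟨h1, h2⟩
          refine ⟨h2, ?_⟩
          rw [hθF]
          simp only [hF]
          have h4 : (R0 : ℚ) ≤ x := by exact_mod_cast h1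
          linarith
      rw [heq2, Nat.card_Ico]
    have hsum := hstairle θ
    rw [c3'] at hsum
    have hNval : N = p1 + p2 + q1 + q2 := hN
    omega
  -- conclusion
  constructor
  · intro m hm hP
    have h1 := B1L m hm
    have h2 := G1 m hm
    have h3 := hveq1 (p2 + m) (by omega) (by omega)
    push_cast at h3
    have h4 : v1 (p2 + m) = i m + ((m : ℚ) + 1) := by
      apply le_antisymm h1
      linarith
    rw [← hv1eval (p2 + m) hP]
    exact h4
  · intro m hm hP
    have h1 := B2L m hm
    have h2 := G2 m hm
    have h3 := hveq1 (p2 + r + m) (by omega) (by omega)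
    push_cast at h3
    have h4 : v1 (p2 + r + m) = j m + ((p1 : ℚ) + p2 - s + m + 1) := by
      apply le_antisymm
      · linarith [hrsQ]
      · linarith [hrsQ]
    rw [← hv1eval (p2 + r + m) hP]
    exact h4


/-- For every solution `(v, (a,b), z)`, the middle windows of the two blocks of `v`
carry exactly the tail entries of `τ̃`: positions `p2+1, …, p−q2` of the left block are
`i_1+1, …, i_r+r, j_1+p−s+1, …, j_s+p`, and positions `q2+1, …, q−p2` of the right
block are `k_1+1, …, k_t+t, l_1+q−u+1, …, l_u+q` (0-based indices below). -/
theorem stmt18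
    (p1 p2 q1 q2 r s t u : ℕ) (ξ : ℤ) (i j k l : ℕ → ℚ)
    (hp1q2 : q2 ≤ p1) (hq1p2 : p2 ≤ q1)
    (hpar : (p1 + q1) % 2 = (p2 + q2) % 2)
    (hξ1 : (p2 : ℤ) + q2 ≤ (p1 : ℤ) + q1 + 2 * ξ)
    (hξ2 : (p2 : ℤ) + q2 + 2 * ξ ≤ (p1 : ℤ) + q1)
    (hξ3 : (p1 : ℤ) + p2 ≤ (q1 : ℤ) + q2 + 2 * ξ)
    (hξ4 : (q1 : ℤ) + q2 ≤ (p1 : ℤ) + p2 + 2 * ξ)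
    (hrt : 2 * ((r : ℤ) + t) = (p1 : ℤ) + q1 - p2 - q2 + 2 * ξ)
    (hsu : 2 * ((s : ℤ) + u) = (p1 : ℤ) + q1 - p2 - q2 - 2 * ξ)
    (hrs : r + s + q2 = p1) (htu : t + u + p2 = q1)
    (hi_anti : ∀ m m', m < m' → m' < r → i m' < i m)
    (hk_anti : ∀ m m', m < m' → m' < t → k m' < k m)
    (hj_anti : ∀ m m', m < m' → m' < s → j m' < j m)
    (hl_anti : ∀ m m', m < m' → m' < u → l m' < l m)
    (hik_disj : Disjoint ((Finset.range r).image i) ((Finset.range t).image k))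
    (hik_union : (Finset.range r).image i ∪ (Finset.range t).image k =
      (Finset.range (r + t)).image (fun m : ℕ => ((p2 : ℚ) + q2 + 1) / 2 + m))
    (hjl_disj : Disjoint ((Finset.range s).image j) ((Finset.range u).image l))
    (hjl_union : (Finset.range s).image j ∪ (Finset.range u).image l =
      (Finset.range (s + u)).image
        (fun m : ℕ => -((p1 : ℚ) + q1 - 1) / 2 + ξ + m))
    (sol : USol p1 p2 q1 q2 r s t u ξ i j k l) :
    (∀ m : ℕ, ∀ hm : m < r,
      sol.vL ⟨p2 + m, by omega⟩ = i m + (m + 1)) ∧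
    (∀ m : ℕ, ∀ hm : m < s,
      sol.vL ⟨p2 + r + m, by omega⟩ = j m + ((p1 : ℚ) + p2 - s + m + 1)) ∧
    (∀ m : ℕ, ∀ hm : m < t,
      sol.vR ⟨q2 + m, by omega⟩ = k m + (m + 1)) ∧
    (∀ m : ℕ, ∀ hm : m < u,
      sol.vR ⟨q2 + t + m, by omega⟩ = l m + ((q1 : ℚ) + q2 - u + m + 1)) := by
  have hL := halfL p1 p2 q1 q2 r s t u ξ i j k l hξ3 hξ4 hrt hsu hrs htu
    hi_anti hk_anti hj_anti hl_anti hik_disj hik_union hjl_disj hjl_union sol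
  have hvR' : Multiset.map sol.vR Finset.univ.val =
      Multiset.map (fun m : Fin (q1 + q2) =>
        blockVec t (q2 + p2) (((q2 : ℚ) + p2 + 1) / 2 + t) k l m.1) Finset.univ.val := by
    rw [sol.hvR, show q2 + p2 = p2 + q2 from by omega,
      show ((q2 : ℚ) + p2 + 1) / 2 + (t : ℚ) = ((p2 : ℚ) + q2 + 1) / 2 + t from by ring]
  have hvL' : Multiset.map sol.vL Finset.univ.val =
      Multiset.map (fun m : Fin (p1 + p2) =>
        blockVec r (q2 + p2) (((q2 : ℚ) + p2 + 1) / 2 + r) i j m.1) Finset.univ.val := by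
    rw [sol.hvL, show q2 + p2 = p2 + q2 from by omega,
      show ((q2 : ℚ) + p2 + 1) / 2 + (r : ℚ) = ((p2 : ℚ) + q2 + 1) / 2 + r from by ring]
  have hz' : Multiset.map sol.zR Finset.univ.val + Multiset.map sol.zL Finset.univ.val =
      Multiset.map (fun m : ℕ => ((q1 : ℚ) + q2 + p1 + p2 - 1) / 2 - m)
        (Finset.range (q1 + q2 + p1 + p2)).val := by
    rw [add_comm, sol.hz, show q1 + q2 + p1 + p2 = p1 + p2 + q1 + q2 from by omega]
    congr 1
    funext m
    ring
  have hik_disj' : Disjoint ((Finset.range t).image k) ((Finset.range r).image i) :=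
    hik_disj.symm
  have hik_union' : (Finset.range t).image k ∪ (Finset.range r).image i =
      (Finset.range (t + r)).image (fun m : ℕ => ((q2 : ℚ) + p2 + 1) / 2 + m) := by
    rw [Finset.union_comm, hik_union, show t + r = r + t from by omega]
    congr 1
    funext m
    ring
  have hjl_disj' : Disjoint ((Finset.range u).image l) ((Finset.range s).image j) :=
    hjl_disj.symm
  have hjl_union' : (Finset.range u).image l ∪ (Finset.range s).image j =
      (Finset.range (u + s)).image (fun m : ℕ => -((q1 : ℚ) + p1 - 1) / 2 + ξ + m) := by
    rw [Finset.union_comm, hjl_union, show u + s = s + u from by omega]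
    congr 1
    funext m
    ring
  let sol' : USol q1 q2 p1 p2 t u r s ξ k l i j :=
    { vL := sol.vR, vR := sol.vL, b := sol.a, a := sol.b, zL := sol.zR, zR := sol.zL,
      b_anti := sol.a_anti, b_nonneg := sol.a_nonneg,
      a_anti := sol.b_anti, a_nonneg := sol.b_nonneg,
      hvL := hvR', hvR := hvL',
      zL_anti := sol.zR_anti, zR_anti := sol.zL_anti, hz := hz',
      heqL := sol.heqR, heqR := sol.heqL }
  have hR := halfL q1 q2 p1 p2 t u r s ξ k l i j hξ4 hξ3 (by omega) (by omega) htu hrs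
    hk_anti hi_anti hl_anti hj_anti hik_disj' hik_union' hjl_disj' hjl_union' sol'
  exact ⟨fun m hm => hL.1 m hm (by omega), fun m hm => hL.2 m hm (by omega),
    fun m hm => hR.1 m hm (by omega), fun m hm => hR.2 m hm (by omega)⟩
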